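/- arXiv:0906.0927 — 3 statements merged into one kernel-verified Lean document; each statement's English description precedes it below -/
import Mathlib

section
/- Each partial derivative J_j = ∂U/∂y_j for j = 1,...,n-1 and the function J_n = ((n-2)/2) U + Σ_b y_b ∂U/∂y_b solve the linearized problem: Δψ = 0 in the interior of R^n_+ and ∂ψ/∂y_n + n U^{2/(n-2)} ψ = 0 on {y_n = 0}. -/
open MeasureTheory Metric

/-- Partial derivative in the `i`-th coordinate direction. -/
noncomputable def pd {n : ℕ} (i : Fin n) (f : EuclideanSpace ℝ (Fin n) → ℝ)
    (y : EuclideanSpace ℝ (Fin n)) : ℝ :=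
  fderiv ℝ f y (EuclideanSpace.single i 1)

/-- Euclidean Laplacian. -/
noncomputable def lap {n : ℕ} (f : EuclideanSpace ℝ (Fin n) → ℝ)
    (y : EuclideanSpace ℝ (Fin n)) : ℝ :=
  ∑ i, pd i (pd i f) y

variable {n : ℕ}

noncomputable def rr (e y : EuclideanSpace ℝ (Fin n)) : ℝ := ∑ i, (y i + e i)^2

noncomputable def Lr (e y : EuclideanSpace ℝ (Fin n)) : EuclideanSpace ℝ (Fin n) →L[ℝ] ℝ :=
  ∑ i, (2 * (y i + e i)) • (EuclideanSpace.proj i)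

lemma proj_single (i j : Fin n) :
    (EuclideanSpace.proj i) (EuclideanSpace.single j (1:ℝ)) = if i = j then 1 else 0 := by
  simp [EuclideanSpace.single_apply]

lemma Lr_apply (e y : EuclideanSpace ℝ (Fin n)) (j : Fin n) :
    Lr e y (EuclideanSpace.single j 1) = 2 * (y j + e j) := by
  simp [Lr, ContinuousLinearMap.sum_apply, proj_single, mul_ite, Finset.sum_ite_eq]

lemma haff (e : EuclideanSpace ℝ (Fin n)) (j : Fin n) (y : EuclideanSpace ℝ (Fin n)) :
    HasFDerivAt (fun z : EuclideanSpace ℝ (Fin n) => z j + e j)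
      (EuclideanSpace.proj j : EuclideanSpace ℝ (Fin n) →L[ℝ] ℝ) y := by
  have h := (EuclideanSpace.proj j : EuclideanSpace ℝ (Fin n) →L[ℝ] ℝ).hasFDerivAt (x := y)
  exact h.add_const (e j)

lemma hasFDerivAt_rr (e y : EuclideanSpace ℝ (Fin n)) : HasFDerivAt (rr e) (Lr e y) y := by
  unfold rr Lr
  apply HasFDerivAt.fun_sum
  intro i _
  have h1 := haff e i y
  have := h1.fun_mul h1
  refine (this.congr_of_eventuallyEq (Filter.Eventually.of_forall fun z => by ring)).congr_fderiv ?_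
  · ext v; simp [two_mul]; ring

lemma continuous_rr (e : EuclideanSpace ℝ (Fin n)) : Continuous (rr e) := by
  unfold rr; fun_prop

lemma hA (e y : EuclideanSpace ℝ (Fin n)) (q : ℝ) (h : rr e y ≠ 0) :
    HasFDerivAt (fun z => rr e z ^ q) ((q * rr e y ^ (q-1)) • Lr e y) y :=
  (hasFDerivAt_rr e y).rpow_const (Or.inl h)

lemma hB (e y : EuclideanSpace ℝ (Fin n)) (j : Fin n) (q : ℝ) (h : rr e y ≠ 0) :
    HasFDerivAt (fun z => (z j + e j) * rr e z ^ q)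
      ((y j + e j) • ((q * rr e y ^ (q-1)) • Lr e y)
        + (rr e y ^ q) • EuclideanSpace.proj j) y :=
  (haff e j y).mul (hA e y q h)

lemma hC (e y : EuclideanSpace ℝ (Fin n)) (j k : Fin n) (q : ℝ) (h : rr e y ≠ 0) :
    HasFDerivAt (fun z => (z j + e j) * ((z k + e k) * rr e z ^ q))
      ((y j + e j) • ((y k + e k) • ((q * rr e y ^ (q-1)) • Lr e y)
          + (rr e y ^ q) • EuclideanSpace.proj k)
        + ((y k + e k) * rr e y ^ q) • EuclideanSpace.proj j) y :=
  (haff e j y).mul (hB e y k q h)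

lemma pd_eq {f : EuclideanSpace ℝ (Fin n) → ℝ} {L : EuclideanSpace ℝ (Fin n) →L[ℝ] ℝ}
    {y : EuclideanSpace ℝ (Fin n)} (h : HasFDerivAt f L y) (i : Fin n) :
    pd i f y = L (EuclideanSpace.single i 1) := by
  rw [pd, h.fderiv]

lemma pd_congr {f g : EuclideanSpace ℝ (Fin n) → ℝ} {y : EuclideanSpace ℝ (Fin n)}
    (h : f =ᶠ[nhds y] g) (i : Fin n) : pd i f y = pd i g y := by
  unfold pd; rw [h.fderiv_eq]


/-- The functions `J_j = ∂U/∂y_j` (for `j = 1,…,n-1`) and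
`J_n = ((n-2)/2) U + Σ_b y_b ∂U/∂y_b` solve the linearized problem
`Δψ = 0` in the interior of `ℝⁿ₊` and `∂ψ/∂y_n + n U^{2/(n-2)} ψ = 0` on `{y_n = 0}`. -/
theorem statement2 (n : ℕ) (hn : 3 ≤ n)
    (U : EuclideanSpace ℝ (Fin n) → ℝ)
    (hU : ∀ y, U y =
      (∑ j : Fin n, if (j : ℕ) = n - 1 then (y j + 1) ^ 2 else (y j) ^ 2)
        ^ (-(((n : ℝ) - 2) / 2))) :
    (∀ j : Fin n, (j : ℕ) ≠ n - 1 →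
      (∀ y : EuclideanSpace ℝ (Fin n), 0 < y ⟨n - 1, by omega⟩ → lap (pd j U) y = 0) ∧
      (∀ y : EuclideanSpace ℝ (Fin n), y ⟨n - 1, by omega⟩ = 0 →
        pd ⟨n - 1, by omega⟩ (pd j U) y +
          (n : ℝ) * U y ^ ((2 : ℝ) / ((n : ℝ) - 2)) * pd j U y = 0)) ∧
    ((∀ y : EuclideanSpace ℝ (Fin n), 0 < y ⟨n - 1, by omega⟩ →
        lap (fun x => ((n : ℝ) - 2) / 2 * U x + ∑ b, x b * pd b U x) y = 0) ∧
      (∀ y : EuclideanSpace ℝ (Fin n), y ⟨n - 1, by omega⟩ = 0 →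
        pd ⟨n - 1, by omega⟩ (fun x => ((n : ℝ) - 2) / 2 * U x + ∑ b, x b * pd b U x) y +
          (n : ℝ) * U y ^ ((2 : ℝ) / ((n : ℝ) - 2)) *
            (((n : ℝ) - 2) / 2 * U y + ∑ b, y b * pd b U y) = 0)) := by
  have hmlt : n - 1 < n := by omega
  set m : Fin n := ⟨n - 1, hmlt⟩ with hmdef
  set e : EuclideanSpace ℝ (Fin n) := EuclideanSpace.single m 1 with hedef
  set p : ℝ := -(((n : ℝ) - 2) / 2) with hpdef
  have hn3 : (3:ℝ) ≤ (n:ℝ) := by exact_mod_cast hn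
  have hnp : (n:ℝ) + 2*p - 2 = 0 := by rw [hpdef]; ring
  have hem : e m = 1 := by rw [hedef]; simp [EuclideanSpace.single_apply]
  have heap : ∀ b : Fin n, e b = if b = m then 1 else 0 := by
    intro b; rw [hedef]; simp [EuclideanSpace.single_apply]
  have hUeq : U = fun z => rr e z ^ p := by
    funext z
    rw [hU z]
    congr 1
    unfold rr
    apply Finset.sum_congr rfl
    intro j _
    rcases eq_or_ne j m with h | h
    · subst h
      simp [hem, hmdef]
    · have hv : (j:ℕ) ≠ n - 1 := by
        intro hc; exact h (Fin.ext hc)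
      simp [hv, heap j, h]
  have hRpos : ∀ y : EuclideanSpace ℝ (Fin n), 0 ≤ y m → 0 < rr e y := by
    intro y hy
    have h1 : (y m + e m)^2 ≤ rr e y :=
      Finset.single_le_sum (f := fun i => (y i + e i)^2) (fun i _ => sq_nonneg _)
        (Finset.mem_univ m)
    rw [hem] at h1
    nlinarith
  have hSopen : IsOpen {z : EuclideanSpace ℝ (Fin n) | rr e z ≠ 0} :=
    isOpen_ne_fun (continuous_rr e) continuous_const
  have hmem : ∀ y, rr e y ≠ 0 → {z | rr e z ≠ 0} ∈ nhds y :=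
    fun y hy => hSopen.mem_nhds hy
  have hpdU : ∀ z, rr e z ≠ 0 → ∀ i, pd i U z = 2*p*((z i + e i) * rr e z ^ (p-1)) := by
    intro z hz i
    have h := hA e z p hz
    rw [← hUeq] at h
    rw [pd_eq h i]
    simp only [ContinuousLinearMap.smul_apply, Lr_apply, smul_eq_mul]
    ring
  have hΨ : ∀ (j : Fin n), ∀ z, rr e z ≠ 0 → ∀ i, pd i (pd j U) z =
      4*p*(p-1)*((z j + e j) * ((z i + e i) * rr e z ^ (p-2)))
        + (2*p*(if j = i then 1 else 0)) * rr e z ^ (p-1) := by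
    intro j z hz i
    have hev : pd j U =ᶠ[nhds z] fun w => 2*p*((w j + e j) * rr e w ^ (p-1)) :=
      Filter.eventually_of_mem (hmem z hz) (fun w hw => hpdU w hw j)
    rw [pd_congr hev i]
    have h := (hB e z j (p-1) hz).const_mul (2*p)
    rw [pd_eq h i]
    simp only [ContinuousLinearMap.smul_apply, ContinuousLinearMap.add_apply,
      Lr_apply, proj_single, smul_eq_mul]
    rw [show p - 1 - 1 = p - 2 by ring]
    by_cases hji : j = i
    · simp only [hji, if_true]; ring
    · simp only [hji, if_false]; ring
  have hn2 : (0:ℝ) < (n:ℝ) - 2 := by linarith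
  have hpow : ∀ z : EuclideanSpace ℝ (Fin n), 0 < rr e z →
      U z ^ ((2:ℝ)/((n:ℝ)-2)) = rr e z ^ (-1:ℝ) := by
    intro z hz
    rw [hUeq]
    show (rr e z ^ p) ^ ((2:ℝ)/((n:ℝ)-2)) = rr e z ^ (-1:ℝ)
    rw [← Real.rpow_mul hz.le]
    congr 1
    rw [hpdef]
    field_simp
  have hΦ : ∀ z, rr e z ≠ 0 → ((n:ℝ)-2)/2 * U z + ∑ b, z b * pd b U z
      = p * rr e z ^ p - 2*p*((z m + e m) * rr e z ^ (p-1)) := by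
    intro z hz
    have h1 : ∀ b : Fin n, z b * pd b U z
        = 2*p*rr e z^(p-1) * (z b * (z b + e b)) := by
      intro b; rw [hpdU z hz b]; ring
    rw [Finset.sum_congr rfl (fun b _ => h1 b), ← Finset.mul_sum]
    have h2 : ∑ b, z b * (z b + e b) = rr e z - (z m + e m) := by
      have h3 : ∀ b : Fin n, z b * (z b + e b) = (z b + e b)^2 - e b * (z b + e b) :=
        fun b => by ring
      rw [Finset.sum_congr rfl (fun b _ => h3 b), Finset.sum_sub_distrib]
      congr 1
      have h4 : ∀ b : Fin n, e b * (z b + e b) = if b = m then z b + e b else 0 := by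
        intro b
        rcases eq_or_ne b m with h | h
        · subst h; rw [hem]; simp
        · simp [heap b, h]
      rw [Finset.sum_congr rfl (fun b _ => h4 b), Finset.sum_ite_eq']
      simp
    rw [h2]
    have hcoef : ((n:ℝ)-2)/2 = -p := by rw [hpdef]; ring
    rw [hcoef, hUeq]
    have e1 : rr e z ^ ((p-1)+1) = rr e z ^ (p-1) * rr e z := Real.rpow_add_one hz (p-1)
    rw [show (p-1)+1 = p by ring] at e1
    show -p * rr e z ^ p + 2*p*rr e z^(p-1) * (rr e z - (z m + e m)) = _
    linear_combination (-2*p) * e1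
  have hΞ : ∀ z, rr e z ≠ 0 → ∀ i : Fin n,
      pd i (fun x => ((n:ℝ)-2)/2 * U x + ∑ b, x b * pd b U x) z =
        2*p^2*((z i + e i) * rr e z ^ (p-1))
          - 4*p*(p-1)*((z m + e m) * ((z i + e i) * rr e z ^ (p-2)))
          - (2*p*(if m = i then 1 else 0)) * rr e z ^ (p-1) := by
    intro z hz i
    have hev : (fun x => ((n:ℝ)-2)/2 * U x + ∑ b, x b * pd b U x) =ᶠ[nhds z]
        (fun w => p * rr e w ^ p - 2*p*((w m + e m) * rr e w ^ (p-1))) :=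
      Filter.eventually_of_mem (hmem z hz) (fun w hw => hΦ w hw)
    rw [pd_congr hev i]
    have h := ((hA e z p hz).const_mul p).fun_sub ((hB e z m (p-1) hz).const_mul (2*p))
    rw [pd_eq h i]
    simp only [ContinuousLinearMap.sub_apply, ContinuousLinearMap.add_apply,
      ContinuousLinearMap.smul_apply, Lr_apply, proj_single, smul_eq_mul]
    rw [show p - 1 - 1 = p - 2 by ring]
    by_cases hmi : m = i
    · simp only [hmi, if_true]; ring
    · simp only [hmi, if_false]; ring
  have part1int : ∀ (j : Fin n), ∀ y : EuclideanSpace ℝ (Fin n), 0 < y m →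
      lap (pd j U) y = 0 := by
    intro j y hy
    have hR := hRpos y hy.le
    have hz := hR.ne'
    have hT : ∀ i, pd i (pd i (pd j U)) y =
        (8*p*(p-1)*(p-2)*(y j + e j) * rr e y ^ (p-3)) * (y i + e i)^2
          + 4*p*(p-1)*(y j + e j) * rr e y ^ (p-2)
          + (if j = i then 8*p*(p-1)*(y i + e i) * rr e y ^ (p-2) else 0) := by
      intro i
      have hev : pd i (pd j U) =ᶠ[nhds y] (fun z =>
          4*p*(p-1)*((z j + e j) * ((z i + e i) * rr e z ^ (p-2)))
            + (2*p*(if j = i then 1 else 0)) * rr e z ^ (p-1)) :=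
        Filter.eventually_of_mem (hmem y hz) (fun w hw => hΨ j w hw i)
      rw [pd_congr hev i]
      have h := ((hC e y j i (p-2) hz).const_mul (4*p*(p-1))).fun_add
        ((hA e y (p-1) hz).const_mul (2*p*(if j = i then 1 else 0)))
      rw [pd_eq h i]
      simp only [ContinuousLinearMap.add_apply, ContinuousLinearMap.smul_apply,
        Lr_apply, proj_single, smul_eq_mul, eq_self_iff_true, if_true]
      rw [show p - 2 - 1 = p - 3 by ring, show p - 1 - 1 = p - 2 by ring]
      by_cases hji : j = i
      · simp only [hji, if_true]; ring
      · simp only [hji, if_false]; ring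
    unfold lap
    rw [Finset.sum_congr rfl (fun i _ => hT i), Finset.sum_add_distrib,
      Finset.sum_add_distrib, ← Finset.mul_sum, Finset.sum_const, Finset.sum_ite_eq]
    simp only [Finset.mem_univ, if_true, Finset.card_univ, Fintype.card_fin, nsmul_eq_mul]
    have hfold : ∑ i, (y i + e i)^2 = rr e y := rfl
    rw [hfold]
    have e2 : rr e y ^ (p-2) = rr e y ^ (p-3) * rr e y := by
      rw [show p-2 = (p-3)+1 by ring, Real.rpow_add_one hz]
    rw [e2]
    linear_combination (4*p*(p-1)*(y j + e j)*(rr e y ^ (p-3) * rr e y)) * hnp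
  have part1bd : ∀ (j : Fin n), j ≠ m → ∀ y : EuclideanSpace ℝ (Fin n), y m = 0 →
      pd m (pd j U) y + (n:ℝ) * U y ^ ((2:ℝ)/((n:ℝ)-2)) * pd j U y = 0 := by
    intro j hjm y hym
    have hR := hRpos y (le_of_eq hym.symm)
    have hz := hR.ne'
    have hej : e j = 0 := by rw [heap j, if_neg hjm]
    rw [hΨ j y hz m, hpdU y hz j, hpow y hR, hem, hym, hej, if_neg hjm]
    have ha : rr e y ^ (-1:ℝ) * rr e y ^ (p-1) = rr e y ^ (p-2) := by
      rw [← Real.rpow_add hR, show (-1)+(p-1) = p-2 by ring]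
    linear_combination (2*p*(y j)*(rr e y ^ (p-2))) * hnp + (2*(n:ℝ)*p*(y j)) * ha
  have part2int : ∀ y : EuclideanSpace ℝ (Fin n), 0 < y m →
      lap (fun x => ((n:ℝ)-2)/2 * U x + ∑ b, x b * pd b U x) y = 0 := by
    intro y hy
    have hR := hRpos y hy.le
    have hz := hR.ne'
    have hT : ∀ i, pd i (pd i (fun x => ((n:ℝ)-2)/2 * U x + ∑ b, x b * pd b U x)) y =
        (4*p^2*(p-1) * rr e y ^ (p-2) - 8*p*(p-1)*(p-2)*(y m + e m) * rr e y ^ (p-3))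
            * (y i + e i)^2
          + (2*p^2 * rr e y ^ (p-1) - 4*p*(p-1)*(y m + e m) * rr e y ^ (p-2))
          + (if m = i then -(8*p*(p-1)*(y i + e i) * rr e y ^ (p-2)) else 0) := by
      intro i
      have hev : pd i (fun x => ((n:ℝ)-2)/2 * U x + ∑ b, x b * pd b U x) =ᶠ[nhds y]
          (fun z => 2*p^2*((z i + e i) * rr e z ^ (p-1))
            - 4*p*(p-1)*((z m + e m) * ((z i + e i) * rr e z ^ (p-2)))
            - (2*p*(if m = i then 1 else 0)) * rr e z ^ (p-1)) :=
        Filter.eventually_of_mem (hmem y hz) (fun w hw => hΞ w hw i)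
      rw [pd_congr hev i]
      have h := (((hB e y i (p-1) hz).const_mul (2*p^2)).fun_sub
        ((hC e y m i (p-2) hz).const_mul (4*p*(p-1)))).fun_sub
        ((hA e y (p-1) hz).const_mul (2*p*(if m = i then 1 else 0)))
      rw [pd_eq h i]
      simp only [ContinuousLinearMap.sub_apply, ContinuousLinearMap.add_apply,
        ContinuousLinearMap.smul_apply, Lr_apply, proj_single, smul_eq_mul, eq_self_iff_true, if_true]
      rw [show p - 2 - 1 = p - 3 by ring, show p - 1 - 1 = p - 2 by ring]
      by_cases hmi : m = i
      · simp only [hmi, if_true]; ring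
      · simp only [hmi, if_false]; ring
    unfold lap
    rw [Finset.sum_congr rfl (fun i _ => hT i), Finset.sum_add_distrib,
      Finset.sum_add_distrib, ← Finset.mul_sum, Finset.sum_const, Finset.sum_ite_eq]
    simp only [Finset.mem_univ, if_true, Finset.card_univ, Fintype.card_fin, nsmul_eq_mul]
    have hfold : ∑ i, (y i + e i)^2 = rr e y := rfl
    rw [hfold]
    have e1 : rr e y ^ (p-1) = rr e y ^ (p-2) * rr e y := by
      rw [show p-1 = (p-2)+1 by ring, Real.rpow_add_one hz]
    have e2 : rr e y ^ (p-2) = rr e y ^ (p-3) * rr e y := by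
      rw [show p-2 = (p-3)+1 by ring, Real.rpow_add_one hz]
    rw [e1, e2]
    linear_combination (2*p^2*(rr e y ^ (p-3) * rr e y * rr e y)
      - 4*p*(p-1)*(y m + e m)*(rr e y ^ (p-3) * rr e y)) * hnp
  have part2bd : ∀ y : EuclideanSpace ℝ (Fin n), y m = 0 →
      pd m (fun x => ((n:ℝ)-2)/2 * U x + ∑ b, x b * pd b U x) y +
        (n:ℝ) * U y ^ ((2:ℝ)/((n:ℝ)-2)) *
          (((n:ℝ)-2)/2 * U y + ∑ b, y b * pd b U y) = 0 := by
    intro y hym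
    have hR := hRpos y (le_of_eq hym.symm)
    have hz := hR.ne'
    rw [hΞ y hz m, hΦ y hz, hpow y hR, hym, hem, if_pos rfl]
    have ha1 : rr e y ^ (-1:ℝ) * rr e y ^ p = rr e y ^ (p-1) := by
      rw [← Real.rpow_add hR, show (-1)+p = p-1 by ring]
    have ha2 : rr e y ^ (-1:ℝ) * rr e y ^ (p-1) = rr e y ^ (p-2) := by
      rw [← Real.rpow_add hR, show (-1)+(p-1) = p-2 by ring]
    linear_combination (p*rr e y ^ (p-1) - 2*p*rr e y ^ (p-2)) * hnp
      + ((n:ℝ)*p) * ha1 + (-2*(n:ℝ)*p) * ha2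
  refine ⟨fun j hj => ⟨fun y hy => part1int j y hy,
    fun y hy => part1bd j (fun h => hj (by rw [h])) y hy⟩,
    fun y hy => part2int y hy, fun y hy => part2bd y hy⟩
end

section
/- The integral ∫_0^∞ (1 - r^2)(1 + r^2)^{-n} log(1 + r^2) r^{n-2} dr is strictly negative for n ≥ 3; consequently ∫_{∂R^n_+} J_n (log U) U^{n/(n-2)} dȳ > 0. -/
open MeasureTheory Metric

section Aux
open Set

noncomputable def gg (n : ℕ) (r : ℝ) : ℝ :=
  (1 - r ^ 2) * (1 + r ^ 2) ^ (-(n : ℝ)) * Real.log (1 + r ^ 2) * r ^ (n - 2)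

lemma one_add_sq_pos (x : ℝ) : (0:ℝ) < 1 + x ^ 2 := by positivity

lemma gg_cont (n : ℕ) : Continuous (gg n) := by
  unfold gg
  have h1 : Continuous fun x : ℝ => (1 + x ^ 2) ^ (-(n : ℝ)) :=
    Continuous.rpow_const (by continuity) fun x => Or.inl (one_add_sq_pos x).ne'
  have h2 : Continuous fun x : ℝ => Real.log (1 + x ^ 2) :=
    Continuous.log (by continuity) fun x => (one_add_sq_pos x).ne'
  continuity

lemma gg_bound (n : ℕ) (hn : 3 ≤ n) (r : ℝ) : |gg n r| ≤ 2 * (1 + r ^ 2)⁻¹ := by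
  have hx1 : 1 ≤ 1 + r ^ 2 := by nlinarith [sq_nonneg r]
  have hx0 : (0:ℝ) < 1 + r ^ 2 := by positivity
  have h1 : |1 - r ^ 2| ≤ 1 + r ^ 2 := abs_le.2 ⟨by nlinarith [sq_nonneg r], by nlinarith [sq_nonneg r]⟩
  have h2 : |Real.log (1 + r ^ 2)| ≤ 2 * (1 + r ^ 2) ^ (1/2 : ℝ) := by
    rw [abs_of_nonneg (Real.log_nonneg hx1)]
    have := Real.log_le_rpow_div hx0.le (by norm_num : (0:ℝ) < 1/2)
    linarith
  have h3 : |r| ^ (n - 2) ≤ (1 + r ^ 2) ^ (((n:ℝ) - 2)/2) := by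
    have hr : |r| ≤ (1 + r ^ 2) ^ (1/2 : ℝ) := by
      rw [← Real.sqrt_eq_rpow, ← Real.sqrt_sq_eq_abs]
      exact Real.sqrt_le_sqrt (by nlinarith)
    calc |r| ^ (n - 2) ≤ ((1 + r ^ 2) ^ (1/2 : ℝ)) ^ (n - 2) :=
          pow_le_pow_left₀ (abs_nonneg r) hr _
      _ = (1 + r ^ 2) ^ (((n:ℝ) - 2)/2) := by
          rw [← Real.rpow_natCast ((1 + r ^ 2) ^ (1/2 : ℝ)) (n - 2), ← Real.rpow_mul hx0.le,
            Nat.cast_sub (by omega)]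
          congr 1
          ring
  have key : |gg n r| ≤ (1 + r ^ 2) * (1 + r ^ 2) ^ (-(n:ℝ)) * (2 * (1 + r ^ 2) ^ (1/2 : ℝ)) *
      (1 + r ^ 2) ^ (((n:ℝ) - 2)/2) := by
    have : |gg n r| = |1 - r ^ 2| * (1 + r ^ 2) ^ (-(n:ℝ)) * |Real.log (1 + r ^ 2)| *
        |r| ^ (n - 2) := by
      rw [gg, abs_mul, abs_mul, abs_mul, abs_of_nonneg (Real.rpow_nonneg hx0.le _), abs_pow]
    rw [this]
    gcongr
  refine key.trans ?_
  have : (1 + r ^ 2) * (1 + r ^ 2) ^ (-(n:ℝ)) * (2 * (1 + r ^ 2) ^ (1/2 : ℝ)) *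
      (1 + r ^ 2) ^ (((n:ℝ) - 2)/2) = 2 * (1 + r ^ 2) ^ (1 + -(n:ℝ) + 1/2 + ((n:ℝ) - 2)/2) := by
    rw [Real.rpow_add hx0, Real.rpow_add hx0, Real.rpow_add hx0, Real.rpow_one]
    ring
  rw [this, ← Real.rpow_neg_one (1 + r ^ 2)]
  have hn' : (3:ℝ) ≤ n := by exact_mod_cast hn
  exact mul_le_mul_of_nonneg_left (Real.rpow_le_rpow_of_exponent_le hx1 (by linarith)) (by norm_num)

lemma gg_integrable (n : ℕ) (hn : 3 ≤ n) : Integrable (gg n) := by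
  refine ((integrable_inv_one_add_sq.const_mul 2).mono (gg_cont n).aestronglyMeasurable
    (ae_of_all _ fun r => ?_))
  rw [Real.norm_eq_abs, Real.norm_eq_abs]
  refine (gg_bound n hn r).trans ?_
  rw [abs_of_nonneg (by positivity)]

noncomputable def hh (n : ℕ) (x : ℝ) : ℝ :=
  (x ^ 2 - 1) * (1 + x ^ 2) ^ (-(n : ℝ)) * (Real.log (1 + x ^ 2) - 2 * Real.log x) * x ^ (n - 2)

lemma image_inv_Ioi_one : (fun x : ℝ => x⁻¹) '' Ioi 1 = Ioo 0 1 := by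
  ext y
  constructor
  · rintro ⟨x, hx, rfl⟩
    exact ⟨inv_pos.2 (lt_trans one_pos hx), inv_lt_one_of_one_lt₀ hx⟩
  · rintro ⟨h0, h1⟩
    exact ⟨y⁻¹, (one_lt_inv₀ h0).2 h1, inv_inv y⟩

lemma hasDeriv_inv_Ioi : ∀ x ∈ Ioi (1:ℝ),
    HasDerivWithinAt (fun y : ℝ => y⁻¹) (-(x ^ 2)⁻¹) (Ioi 1) x := fun x hx =>
  (hasDerivAt_inv (ne_of_gt (lt_trans one_pos hx))).hasDerivWithinAt

lemma pointwise_subst (n : ℕ) (hn : 3 ≤ n) {x : ℝ} (hx : 1 < x) :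
    |(-(x ^ 2)⁻¹)| • gg n x⁻¹ = hh n x := by
  obtain ⟨m, rfl⟩ : ∃ m, n = m + 3 := ⟨n - 3, by omega⟩
  have hx0 : (0:ℝ) < x := lt_trans one_pos hx
  have hx2 : (0:ℝ) < x ^ 2 := by positivity
  have h1x : (0:ℝ) < 1 + x ^ 2 := by positivity
  have e1 : 1 + x⁻¹ ^ 2 = (1 + x ^ 2) * (x ^ 2)⁻¹ := by field_simp; ring
  have e2 : (1 + x⁻¹ ^ 2) ^ (-((m+3 : ℕ) : ℝ)) =
      (1 + x ^ 2) ^ (-((m+3 : ℕ) : ℝ)) * (x ^ 2) ^ (m + 3 : ℕ) := by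
    rw [e1, Real.mul_rpow h1x.le (inv_nonneg.2 hx2.le), Real.inv_rpow hx2.le,
      ← Real.rpow_neg hx2.le, neg_neg, Real.rpow_natCast]
  have e3 : Real.log (1 + x⁻¹ ^ 2) = Real.log (1 + x ^ 2) - 2 * Real.log x := by
    rw [e1, Real.log_mul h1x.ne' (inv_ne_zero hx2.ne'), Real.log_inv, Real.log_pow]
    push_cast; ring
  have hm : (m + 3) - 2 = m + 1 := by omega
  rw [abs_of_nonpos (neg_nonpos.2 (by positivity)), neg_neg, smul_eq_mul, gg, hh, e2, e3, hm]
  have : x⁻¹ ^ (m + 1) = (x ^ (m + 1))⁻¹ := by rw [inv_pow]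
  rw [this]
  field_simp
  ring

lemma inj_inv : Set.InjOn (fun x : ℝ => x⁻¹) (Ioi 1) :=
  inv_injective.injOn

lemma subst_integral (n : ℕ) (hn : 3 ≤ n) :
    ∫ x in Ioo (0:ℝ) 1, gg n x = ∫ x in Ioi (1:ℝ), hh n x := by
  rw [← image_inv_Ioi_one,
    integral_image_eq_integral_abs_deriv_smul measurableSet_Ioi hasDeriv_inv_Ioi inj_inv]
  exact setIntegral_congr_fun measurableSet_Ioi fun x hx => pointwise_subst n hn hx

lemma hh_integrable (n : ℕ) (hn : 3 ≤ n) : IntegrableOn (hh n) (Ioi 1) := by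
  have h := (integrableOn_image_iff_integrableOn_abs_deriv_smul measurableSet_Ioi
    hasDeriv_inv_Ioi inj_inv (gg n)).1
  rw [image_inv_Ioi_one] at h
  exact (h ((gg_integrable n hn).integrableOn)).congr_fun
    (fun x hx => pointwise_subst n hn hx) measurableSet_Ioi

noncomputable def kk (n : ℕ) (x : ℝ) : ℝ :=
  2 * (x ^ 2 - 1) * (1 + x ^ 2) ^ (-(n : ℝ)) * x ^ (n - 2) * Real.log x

lemma hh_add_gg (n : ℕ) (x : ℝ) : hh n x + gg n x = -(kk n x) := by
  rw [hh, gg, kk]; ring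

lemma kk_integrable (n : ℕ) (hn : 3 ≤ n) : IntegrableOn (kk n) (Ioi 1) := by
  have : IntegrableOn (fun x => -(hh n x + gg n x)) (Ioi 1) :=
    ((hh_integrable n hn).add (gg_integrable n hn).integrableOn).neg
  exact this.congr_fun (fun x _ => by show -(hh n x + gg n x) = kk n x; rw [hh_add_gg, neg_neg]) measurableSet_Ioi

lemma kk_pos (n : ℕ) (hn : 3 ≤ n) : 0 < ∫ x in Ioi (1:ℝ), kk n x := by
  have hnn : 0 ≤ᵐ[volume.restrict (Ioi (1:ℝ))] kk n := by
    filter_upwards [ae_restrict_mem measurableSet_Ioi] with x hx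
    have hx1 : (1:ℝ) < x := hx
    have : (0:ℝ) < 1 + x ^ 2 := by positivity
    have h1 : (0:ℝ) < x ^ 2 - 1 := by nlinarith
    have h2 : (0:ℝ) < Real.log x := Real.log_pos hx1
    have h3 : (0:ℝ) < (1 + x ^ 2) ^ (-(n:ℝ)) := Real.rpow_pos_of_pos this _
    have h4 : (0:ℝ) < x ^ (n - 2) := pow_pos (lt_trans one_pos hx1) _
    rw [kk]; positivity
  rw [setIntegral_pos_iff_support_of_nonneg_ae hnn (kk_integrable n hn)]
  have hsub : Ioi (1:ℝ) ⊆ Function.support (kk n) ∩ Ioi 1 := by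
    intro x hx
    refine ⟨?_, hx⟩
    have hx1 : (1:ℝ) < x := hx
    have : (0:ℝ) < 1 + x ^ 2 := by positivity
    have h1 : (0:ℝ) < x ^ 2 - 1 := by nlinarith
    have h2 : (0:ℝ) < Real.log x := Real.log_pos hx1
    have h3 : (0:ℝ) < (1 + x ^ 2) ^ (-(n:ℝ)) := Real.rpow_pos_of_pos this _
    have h4 : (0:ℝ) < x ^ (n - 2) := pow_pos (lt_trans one_pos hx1) _
    have : 0 < kk n x := by rw [kk]; positivity
    exact ne_of_gt this
  calc (0:ENNReal) < volume (Ioi (1:ℝ)) := by simp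
    _ ≤ _ := measure_mono hsub

lemma part1 (n : ℕ) (hn : 3 ≤ n) : (∫ r in Ioi (0:ℝ), gg n r) < 0 := by
  have hdecomp : (∫ r in Ioi (0:ℝ), gg n r) =
      (∫ r in Ioo (0:ℝ) 1, gg n r) + ∫ r in Ici (1:ℝ), gg n r := by
    rw [← setIntegral_union ((Set.Iio_disjoint_Ici le_rfl).mono_left Set.Ioo_subset_Iio_self) measurableSet_Ici
      (gg_integrable n hn).integrableOn (gg_integrable n hn).integrableOn,
      Ioo_union_Ici_eq_Ioi one_pos]
  rw [hdecomp, integral_Ici_eq_integral_Ioi, subst_integral n hn,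
    ← integral_add (hh_integrable n hn) (gg_integrable n hn).integrableOn]
  have : (∫ x in Ioi (1:ℝ), (hh n x + gg n x)) = -∫ x in Ioi (1:ℝ), kk n x := by
    rw [← integral_neg]
    exact setIntegral_congr_fun measurableSet_Ioi fun x _ => hh_add_gg n x
  rw [this]
  linarith [kk_pos n hn]

noncomputable def aa (n : ℕ) (r : ℝ) : ℝ :=
  (((n : ℝ) - 2) / 2 * (1 - r ^ 2) * (1 + r ^ 2) ^ (-((n : ℝ) / 2))) *
    Real.log ((1 + r ^ 2) ^ (-(((n : ℝ) - 2) / 2))) * ((1 + r ^ 2) ^ (-((n : ℝ) / 2)))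

lemma aa_eq (n : ℕ) (r : ℝ) :
    r ^ (n - 2) • aa n r = (-((((n : ℝ) - 2) ^ 2) / 4)) * gg n r := by
  have h1x : (0:ℝ) < 1 + r ^ 2 := by positivity
  have e1 : Real.log ((1 + r ^ 2) ^ (-(((n : ℝ) - 2) / 2))) =
      (-(((n : ℝ) - 2) / 2)) * Real.log (1 + r ^ 2) := Real.log_rpow h1x _
  have e2 : (1 + r ^ 2) ^ (-(n : ℝ)) =
      (1 + r ^ 2) ^ (-((n : ℝ) / 2)) * (1 + r ^ 2) ^ (-((n : ℝ) / 2)) := by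
    rw [← Real.rpow_add h1x]
    congr 1
    ring
  rw [smul_eq_mul, aa, gg, e1, e2]
  ring

theorem part2 (n : ℕ) (hn : 3 ≤ n) :
    0 < ∫ y : EuclideanSpace ℝ (Fin (n - 1)), aa n ‖y‖ := by
  haveI : Nontrivial (EuclideanSpace ℝ (Fin (n - 1))) :=
    Module.nontrivial_of_finrank_pos (R := ℝ)
      (by rw [finrank_euclideanSpace_fin]; omega)
  rw [MeasureTheory.integral_fun_norm_addHaar (volume : Measure (EuclideanSpace ℝ (Fin (n - 1))))
    (aa n)]
  rw [finrank_euclideanSpace_fin]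
  have hm : n - 1 - 1 = n - 2 := by omega
  rw [hm]
  have heq : (∫ y in Ioi (0:ℝ), y ^ (n - 2) • aa n y) =
      (-((((n : ℝ) - 2) ^ 2) / 4)) * ∫ r in Ioi (0:ℝ), gg n r := by
    rw [← integral_const_mul]
    exact setIntegral_congr_fun measurableSet_Ioi fun r _ => aa_eq n r
  rw [heq, nsmul_eq_mul, smul_eq_mul]
  have h1 : (0:ℝ) < (n : ℝ) - 1 := by
    have : (3:ℝ) ≤ n := by exact_mod_cast hn
    linarith
  have h2 : (0:ℝ) < (volume (ball (0 : EuclideanSpace ℝ (Fin (n - 1))) 1)).toReal := by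
    refine ENNReal.toReal_pos (ne_of_gt (measure_ball_pos _ _ one_pos)) measure_ball_lt_top.ne
  have h3 : (0:ℝ) < -((((n : ℝ) - 2) ^ 2) / 4) * ∫ r in Ioi (0:ℝ), gg n r := by
    have hI := part1 n hn
    have : (0:ℝ) < (((n : ℝ) - 2) ^ 2) / 4 := by
      have : (3:ℝ) ≤ n := by exact_mod_cast hn
      nlinarith
    nlinarith
  have h0 : (0:ℝ) < ((n - 1 : ℕ) : ℝ) := by
    have : 0 < n - 1 := by omega
    exact_mod_cast this
  exact mul_pos h0 (mul_pos h2 h3)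

end Aux

/-- The integral `∫_0^∞ (1-r²)(1+r²)^{-n} log(1+r²) r^{n-2} dr` is strictly negative for
`n ≥ 3`; consequently `∫_{∂ℝⁿ₊} J_n (log U) U^{n/(n-2)} dȳ > 0`, where on the boundary
`J_n = ((n-2)/2)(1-|ȳ|²)(1+|ȳ|²)^{-n/2}`, `U = (1+|ȳ|²)^{-(n-2)/2}` and
`U^{n/(n-2)} = (1+|ȳ|²)^{-n/2}`. -/
theorem statement5 (n : ℕ) (hn : 3 ≤ n) :
    (∫ r in Set.Ioi (0 : ℝ),
        (1 - r ^ 2) * (1 + r ^ 2) ^ (-(n : ℝ)) * Real.log (1 + r ^ 2) * r ^ (n - 2)) < 0 ∧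
    0 < ∫ y : EuclideanSpace ℝ (Fin (n - 1)),
        (((n : ℝ) - 2) / 2 * (1 - ‖y‖ ^ 2) * (1 + ‖y‖ ^ 2) ^ (-((n : ℝ) / 2))) *
          Real.log ((1 + ‖y‖ ^ 2) ^ (-(((n : ℝ) - 2) / 2))) *
          ((1 + ‖y‖ ^ 2) ^ (-((n : ℝ) / 2))) := by
  exact ⟨part1 n hn, part2 n hn⟩
end

section
/- Let I = ∫_0^∞ s^n (1+s^2)^{-n} ds. Then for every t ≥ 0: ∫_0^∞ (s^2 + t^2 - 1)(s^2 + (t+1)^2)^{-(n+1)} s^n ds = I · [ ((n+1)/(2n)) (t+1)^{1-n} + ((n-1)/(2n)) (t^2-1)(t+1)^{-1-n} ]. -/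
open MeasureTheory Set Filter Real Topology

lemma aux_integrable (k : ℕ) (m : ℝ) (h : (k : ℝ) - 2 * m < -1) :
    IntegrableOn (fun s : ℝ => s ^ k * (1 + s ^ 2) ^ (-m)) (Ioi 0) := by
  have hcont : Continuous (fun s : ℝ => s ^ k * (1 + s ^ 2) ^ (-m)) := by
    apply (continuous_pow k).mul
    apply Continuous.rpow_const (by continuity)
    intro x; left; positivity
  have h1 : IntegrableOn (fun s : ℝ => s ^ k * (1 + s ^ 2) ^ (-m)) (Ioc 0 1) :=
    hcont.integrableOn_Ioc
  have h2 : IntegrableOn (fun s : ℝ => s ^ k * (1 + s ^ 2) ^ (-m)) (Ioi 1) := by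
    have hg : IntegrableOn (fun s : ℝ => s ^ ((k : ℝ) - 2 * m)) (Ioi 1) :=
      integrableOn_Ioi_rpow_of_lt h one_pos
    refine Integrable.mono hg (hcont.aestronglyMeasurable.restrict) ?_
    filter_upwards [ae_restrict_mem measurableSet_Ioi] with s hs
    have hs1 : (1 : ℝ) < s := hs
    have hs0 : (0 : ℝ) < s := lt_trans one_pos hs1
    have hm : 0 ≤ m := by nlinarith [Nat.cast_nonneg (α := ℝ) k]
    rw [norm_mul, norm_eq_abs, norm_eq_abs, norm_eq_abs,
      abs_of_nonneg (by positivity : (0:ℝ) ≤ s ^ k),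
      abs_of_nonneg (by positivity : (0:ℝ) ≤ (1 + s ^ 2) ^ (-m)),
      abs_of_nonneg (by positivity : (0:ℝ) ≤ s ^ ((k : ℝ) - 2 * m))]
    have hb : (1 + s ^ 2) ^ (-m) ≤ (s ^ 2) ^ (-m) := by
      apply Real.rpow_le_rpow_of_nonpos (by positivity) (by linarith) (by linarith)
    calc s ^ k * (1 + s ^ 2) ^ (-m) ≤ s ^ k * (s ^ 2) ^ (-m) := by
          exact mul_le_mul_of_nonneg_left hb (by positivity)
      _ = s ^ ((k : ℝ) - 2 * m) := by
          rw [← Real.rpow_natCast s k, ← Real.rpow_natCast s 2,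
            ← Real.rpow_mul hs0.le, ← Real.rpow_add hs0]
          ring_nf
  have : Ioi (0:ℝ) = Ioc 0 1 ∪ Ioi 1 := (Ioc_union_Ioi_eq_Ioi one_pos.le).symm
  rw [this]
  exact h1.union h2

lemma aux_J1 (n : ℕ) (hn : 3 ≤ n) :
    ∫ s in Ioi (0:ℝ), s ^ (n+2) * (1+s^2) ^ (-((n:ℝ)+1))
      = ((n:ℝ)+1)/(2*(n:ℝ)) * ∫ s in Ioi (0:ℝ), s ^ n * (1+s^2) ^ (-(n:ℝ)) := by
  have hn0 : (0:ℝ) < (n:ℝ) := by positivity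
  have hnR : (3:ℝ) ≤ (n:ℝ) := by exact_mod_cast hn
  set F : ℝ → ℝ := fun s => 1/(2*(n:ℝ)) * (s ^ (n+1) * (1+s^2) ^ (-(n:ℝ))) with hF
  set F' : ℝ → ℝ := fun s =>
    ((n:ℝ)+1)/(2*(n:ℝ)) * (s ^ n * (1+s^2) ^ (-(n:ℝ)))
      - s ^ (n+2) * (1+s^2) ^ (-((n:ℝ)+1)) with hF'
  have hderiv : ∀ s ∈ Ici (0:ℝ), HasDerivAt F (F' s) s := by
    intro s _
    have h1 : HasDerivAt (fun s : ℝ => (1+s^2)) (2*s) s := by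
      simpa using ((hasDerivAt_pow 2 s).const_add 1)
    have h2 : HasDerivAt (fun s : ℝ => (1+s^2) ^ (-(n:ℝ)))
        (-(n:ℝ) * (1+s^2) ^ (-(n:ℝ)-1) * (2*s)) s := by
      have := h1.rpow_const (p := -(n:ℝ)) (Or.inl (by positivity))
      convert this using 1; ring
    have h3 : HasDerivAt (fun s : ℝ => s ^ (n+1)) (((n:ℝ)+1) * s ^ n) s := by
      simpa using hasDerivAt_pow (n+1) s
    have h4 := ((h3.mul h2)).const_mul (1/(2*(n:ℝ)))
    convert h4 using 1
    · rfl
    · rfl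
    · rfl
    have he : (-(n:ℝ)-1) = -((n:ℝ)+1) := by ring
    have hp : (1+s^2) ^ (-(n:ℝ)-1) = (1+s^2) ^ (-((n:ℝ)+1)) := by rw [he]
    rw [hF']
    simp only [hp]
    have hs2 : s ^ (n+2) = s ^ (n+1) * s := by ring
    rw [hs2]
    field_simp
    ring
  have hint1 : IntegrableOn (fun s : ℝ => s ^ n * (1+s^2) ^ (-(n:ℝ))) (Ioi 0) :=
    aux_integrable n n (by push_cast; linarith)
  have hint2 : IntegrableOn (fun s : ℝ => s ^ (n+2) * (1+s^2) ^ (-((n:ℝ)+1))) (Ioi 0) :=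
    aux_integrable (n+2) ((n:ℝ)+1) (by push_cast; linarith)
  have f'int : IntegrableOn F' (Ioi 0) := (hint1.const_mul _).sub hint2
  have htend : Tendsto F atTop (𝓝 0) := by
    have hbound : Tendsto (fun s : ℝ => 1/(2*(n:ℝ)) * s ^ (((n:ℝ)+1) - 2*(n:ℝ)))
        atTop (𝓝 0) := by
      have : Tendsto (fun s : ℝ => s ^ (-((n:ℝ)-1))) atTop (𝓝 0) :=
        tendsto_rpow_neg_atTop (by linarith)
      have heq : (fun s : ℝ => s ^ (((n:ℝ)+1) - 2*(n:ℝ))) = fun s : ℝ => s ^ (-((n:ℝ)-1)) := by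
        funext s; congr 1; ring
      rw [show (0:ℝ) = 1/(2*(n:ℝ)) * 0 by ring]
      exact (heq ▸ this).const_mul _
    apply squeeze_zero' (g := fun s : ℝ => 1/(2*(n:ℝ)) * s ^ (((n:ℝ)+1) - 2*(n:ℝ)))
      ?_ ?_ hbound
    · filter_upwards [eventually_ge_atTop (0:ℝ)] with s hs
      rw [hF]; positivity
    · filter_upwards [eventually_ge_atTop (1:ℝ)] with s hs
      have hs0 : (0:ℝ) < s := lt_of_lt_of_le one_pos hs
      rw [hF]
      have hb : (1 + s ^ 2) ^ (-(n:ℝ)) ≤ (s ^ 2) ^ (-(n:ℝ)) :=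
        Real.rpow_le_rpow_of_nonpos (by positivity) (by linarith) (by linarith)
      have : s ^ (n+1) * (1+s^2) ^ (-(n:ℝ)) ≤ s ^ (((n:ℝ)+1) - 2*(n:ℝ)) := by
        calc s ^ (n+1) * (1+s^2) ^ (-(n:ℝ)) ≤ s ^ (n+1) * (s^2) ^ (-(n:ℝ)) :=
              mul_le_mul_of_nonneg_left hb (by positivity)
          _ = s ^ (((n:ℝ)+1) - 2*(n:ℝ)) := by
              rw [← Real.rpow_natCast s (n+1), ← Real.rpow_natCast s 2,
                ← Real.rpow_mul hs0.le, ← Real.rpow_add hs0]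
              push_cast; ring_nf
      exact mul_le_mul_of_nonneg_left this (by positivity)
  have key : (∫ s in Ioi (0:ℝ), F' s) = 0 - F 0 :=
    integral_Ioi_of_hasDerivAt_of_tendsto' hderiv f'int htend
  have hF0 : F 0 = 0 := by simp [hF]
  rw [hF0, sub_zero] at key
  have hsplit : (∫ s in Ioi (0:ℝ), F' s)
      = ((n:ℝ)+1)/(2*(n:ℝ)) * (∫ s in Ioi (0:ℝ), s ^ n * (1+s^2) ^ (-(n:ℝ)))
        - ∫ s in Ioi (0:ℝ), s ^ (n+2) * (1+s^2) ^ (-((n:ℝ)+1)) := by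
    rw [hF']
    rw [integral_sub (hint1.const_mul _) hint2, MeasureTheory.integral_const_mul]
  rw [hsplit] at key
  linarith

lemma aux_J2 (n : ℕ) (hn : 3 ≤ n) :
    ∫ s in Ioi (0:ℝ), s ^ n * (1+s^2) ^ (-((n:ℝ)+1))
      = ((n:ℝ)-1)/(2*(n:ℝ)) * ∫ s in Ioi (0:ℝ), s ^ n * (1+s^2) ^ (-(n:ℝ)) := by
  have hn0 : (0:ℝ) < (n:ℝ) := by positivity
  have hnR : (3:ℝ) ≤ (n:ℝ) := by exact_mod_cast hn
  have hint1 : IntegrableOn (fun s : ℝ => s ^ n * (1+s^2) ^ (-(n:ℝ))) (Ioi 0) :=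
    aux_integrable n n (by push_cast; linarith)
  have hint2 : IntegrableOn (fun s : ℝ => s ^ (n+2) * (1+s^2) ^ (-((n:ℝ)+1))) (Ioi 0) :=
    aux_integrable (n+2) ((n:ℝ)+1) (by push_cast; linarith)
  have hpt : ∀ s : ℝ, s ^ n * (1+s^2) ^ (-((n:ℝ)+1))
      = s ^ n * (1+s^2) ^ (-(n:ℝ)) - s ^ (n+2) * (1+s^2) ^ (-((n:ℝ)+1)) := by
    intro s
    have hpos : (0:ℝ) < 1 + s^2 := by positivity
    have h5 : (1+s^2) ^ (-((n:ℝ)+1)) * (1+s^2) ^ (1:ℝ) = (1+s^2) ^ (-(n:ℝ)) := by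
      rw [← Real.rpow_add hpos]; norm_num
    rw [Real.rpow_one] at h5
    rw [← h5]
    have h6 : s ^ (n+2) = s ^ n * s ^ 2 := by ring
    rw [h6]; ring
  simp only [hpt]
  rw [integral_sub hint1 hint2, aux_J1 n hn]
  field_simp
  ring

/-- With `I = ∫_0^∞ sⁿ (1+s²)^{-n} ds`, for every `t ≥ 0`:
`∫_0^∞ (s² + t² - 1)(s² + (t+1)²)^{-(n+1)} sⁿ ds
  = I [ ((n+1)/(2n)) (t+1)^{1-n} + ((n-1)/(2n)) (t²-1)(t+1)^{-1-n} ]`. -/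
theorem statement12 (n : ℕ) (hn : 3 ≤ n) (t : ℝ) (ht : 0 ≤ t) :
    (∫ s in Set.Ioi (0 : ℝ),
        (s ^ 2 + t ^ 2 - 1) * (s ^ 2 + (t + 1) ^ 2) ^ (-((n : ℝ) + 1)) * s ^ n) =
      (∫ s in Set.Ioi (0 : ℝ), s ^ n * (1 + s ^ 2) ^ (-(n : ℝ))) *
        (((n : ℝ) + 1) / (2 * n) * (t + 1) ^ (1 - (n : ℝ)) +
          ((n : ℝ) - 1) / (2 * n) * (t ^ 2 - 1) * (t + 1) ^ (-1 - (n : ℝ))) := by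
  have hn0 : (0:ℝ) < (n:ℝ) := by positivity
  have hnR : (3:ℝ) ≤ (n:ℝ) := by exact_mod_cast hn
  set c : ℝ := t + 1 with hcdef
  have hc : 0 < c := by simp [hcdef]; linarith
  set g : ℝ → ℝ := fun s => (s ^ 2 + t ^ 2 - 1) * (s ^ 2 + c ^ 2) ^ (-((n : ℝ) + 1)) * s ^ n
    with hg
  have hsub := integral_comp_mul_left_Ioi g 0 hc
  rw [mul_zero, smul_eq_mul] at hsub
  have hmain : (∫ s in Ioi (0:ℝ), g s) = c * ∫ x in Ioi (0:ℝ), g (c * x) := by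
    rw [hsub, ← mul_assoc, mul_inv_cancel₀ hc.ne', one_mul]
  have hpt : ∀ x : ℝ, g (c * x)
      = c ^ (-(n:ℝ) - 2) * c ^ 2 * (x ^ (n+2) * (1 + x ^ 2) ^ (-((n:ℝ)+1)))
        + c ^ (-(n:ℝ) - 2) * (t ^ 2 - 1) * (x ^ n * (1 + x ^ 2) ^ (-((n:ℝ)+1))) := by
    intro x
    rw [hg]
    simp only []
    have e1 : (c * x) ^ 2 + c ^ 2 = c ^ 2 * (1 + x ^ 2) := by ring
    rw [e1, Real.mul_rpow (sq_nonneg c) (by positivity)]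
    simp only [mul_pow]
    have e2 : (c ^ 2) ^ (-((n:ℝ)+1)) * c ^ n = c ^ (-(n:ℝ) - 2) := by
      rw [← Real.rpow_natCast c 2, ← Real.rpow_natCast c n, ← Real.rpow_mul hc.le,
        ← Real.rpow_add hc]
      congr 1; push_cast; ring
    linear_combination ((c * x) ^ 2 + t ^ 2 - 1) * (1 + x ^ 2) ^ (-((n:ℝ)+1)) * x ^ n * e2
  have hint1 : IntegrableOn (fun s : ℝ => s ^ n * (1+s^2) ^ (-(n:ℝ))) (Ioi 0) :=
    aux_integrable n n (by push_cast; linarith)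
  have hint2 : IntegrableOn (fun s : ℝ => s ^ (n+2) * (1+s^2) ^ (-((n:ℝ)+1))) (Ioi 0) :=
    aux_integrable (n+2) ((n:ℝ)+1) (by push_cast; linarith)
  have hint3 : IntegrableOn (fun s : ℝ => s ^ n * (1+s^2) ^ (-((n:ℝ)+1))) (Ioi 0) :=
    aux_integrable n ((n:ℝ)+1) (by push_cast; linarith)
  have hinner : (∫ x in Ioi (0:ℝ), g (c * x))
      = c ^ (-(n:ℝ) - 2) * c ^ 2
          * (((n:ℝ)+1)/(2*(n:ℝ)) * ∫ s in Ioi (0:ℝ), s ^ n * (1+s^2) ^ (-(n:ℝ)))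
        + c ^ (-(n:ℝ) - 2) * (t ^ 2 - 1)
          * (((n:ℝ)-1)/(2*(n:ℝ)) * ∫ s in Ioi (0:ℝ), s ^ n * (1+s^2) ^ (-(n:ℝ))) := by
    simp only [hpt]
    rw [MeasureTheory.integral_add (hint2.const_mul _) (hint3.const_mul _),
      MeasureTheory.integral_const_mul, MeasureTheory.integral_const_mul,
      aux_J1 n hn, aux_J2 n hn]
  rw [hmain, hinner]
  set I : ℝ := ∫ s in Ioi (0:ℝ), s ^ n * (1+s^2) ^ (-(n:ℝ)) with hI
  have p1 : c ^ (1 - (n:ℝ)) = c * (c ^ (-(n:ℝ) - 2) * c ^ 2) := by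
    rw [show (1 - (n:ℝ)) = 1 + ((-(n:ℝ) - 2) + 2) by ring, Real.rpow_add hc,
      Real.rpow_add hc, Real.rpow_one]
    norm_num
  have p2 : c ^ (-1 - (n:ℝ)) = c * c ^ (-(n:ℝ) - 2) := by
    rw [show (-1 - (n:ℝ)) = 1 + (-(n:ℝ) - 2) by ring, Real.rpow_add hc, Real.rpow_one]
  rw [p1, p2]
  ring
end
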